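/- arXiv:0811.1561 — 2 statements merged into one kernel-verified Lean document; each statement's English description precedes it below -/
import Mathlib

section
/- Let x : ℕ → ℝ satisfy the order-n recurrence x(t+n) = Σ_{j=1}^{n} aⱼ x(t+n−j) and suppose x satisfies no linear recurrence of order strictly less than n with constant coefficients. Then the Hankel-type linear system expressing the recurrence, namely the n×n matrix H with entries H(i,j) = x(i+j) for 0 ≤ i, j ≤ n−1, is invertible; consequently the coefficients a₁,…,aₙ are uniquely determined by the sequence x. -/
open Finset

/-- reflect sum over Icc 1 m to range m -/
lemma sum_Icc_reflect' (m : ℕ) (g : ℕ → ℝ) :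
    ∑ j ∈ Finset.Icc 1 m, g j = ∑ i ∈ Finset.range m, g (m - i) := by
  refine Finset.sum_nbij' (fun j => m - j) (fun i => m - i) ?_ ?_ ?_ ?_ ?_
  · intro j hj; simp only [Finset.mem_Icc] at hj; simp only [Finset.mem_range]; omega
  · intro i hi; simp only [Finset.mem_range] at hi; simp only [Finset.mem_Icc]; omega
  · intro j hj; simp only [Finset.mem_Icc] at hj; show m - (m - j) = j; omega
  · intro i hi; simp only [Finset.mem_range] at hi; show m - (m - i) = i; omega
  · intro j hj; simp only [Finset.mem_Icc] at hj
    show g j = g (m - (m - j)); congr 1; omega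

/-- extension of a kernel relation to all shifts -/
lemma ext_rel (x : ℕ → ℝ) (n : ℕ) (a : ℕ → ℝ)
    (hrec : ∀ t : ℕ, x (t + n) = ∑ j ∈ Finset.Icc 1 n, a j * x (t + n - j))
    (v : ℕ → ℝ)
    (h0 : ∀ i < n, ∑ j ∈ Finset.range n, v j * x (i + j) = 0) :
    ∀ t, ∑ j ∈ Finset.range n, v j * x (t + j) = 0 := by
  intro t
  induction t using Nat.strong_induction_on with
  | _ t ih =>
    rcases lt_or_ge t n with h | h
    · exact h0 t h
    rcases Nat.eq_zero_or_pos n with rfl | hn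
    · simp
    have key : ∀ j < n, x (t + j) = ∑ i ∈ Finset.Icc 1 n, a i * x ((t - i) + j) := by
      intro j hj
      have : t + j = (t - n + j) + n := by omega
      rw [this, hrec]
      apply Finset.sum_congr rfl
      intro i hi
      simp only [Finset.mem_Icc] at hi
      congr 2
      omega
    calc ∑ j ∈ Finset.range n, v j * x (t + j)
        = ∑ j ∈ Finset.range n, ∑ i ∈ Finset.Icc 1 n, a i * (v j * x ((t - i) + j)) := by
          apply Finset.sum_congr rfl
          intro j hj
          rw [key j (Finset.mem_range.mp hj), Finset.mul_sum]
          apply Finset.sum_congr rfl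
          intro i _
          ring
      _ = ∑ i ∈ Finset.Icc 1 n, a i * ∑ j ∈ Finset.range n, v j * x ((t - i) + j) := by
          rw [Finset.sum_comm]
          simp [Finset.mul_sum]
      _ = 0 := by
          apply Finset.sum_eq_zero
          intro i hi
          simp only [Finset.mem_Icc] at hi
          rw [ih (t - i) (by omega)]
          ring

/-- If `x` satisfies an order-`n` recurrence but none of strictly smaller order, then the
`n × n` Hankel matrix `(x(i+j))` is invertible, and the recurrence coefficients are
uniquely determined by `x`. -/
theorem stmt11 (x : ℕ → ℝ) (n : ℕ) (a : ℕ → ℝ)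
    (hrec : ∀ t : ℕ, x (t + n) = ∑ j ∈ Finset.Icc 1 n, a j * x (t + n - j))
    (hmin : ∀ m < n, ¬ ∃ c : ℕ → ℝ,
      ∀ t : ℕ, x (t + m) = ∑ j ∈ Finset.Icc 1 m, c j * x (t + m - j)) :
    (Matrix.of fun i j : Fin n => x (i + j)).det ≠ 0 ∧
    ∀ a' : ℕ → ℝ,
      (∀ t : ℕ, x (t + n) = ∑ j ∈ Finset.Icc 1 n, a' j * x (t + n - j)) →
      ∀ j ∈ Finset.Icc 1 n, a j = a' j := by
  have hdet : (Matrix.of fun i j : Fin n => x (i + j)).det ≠ 0 := by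
    intro hdet
    obtain ⟨v, hv0, hmul⟩ := (Matrix.exists_mulVec_eq_zero_iff).mpr hdet
    set v' : ℕ → ℝ := fun j => if h : j < n then v ⟨j, h⟩ else 0 with hv'
    have h0 : ∀ i < n, ∑ j ∈ Finset.range n, v' j * x (i + j) = 0 := by
      intro i hi
      have := congrFun hmul ⟨i, hi⟩
      simp only [Matrix.mulVec, dotProduct, Matrix.of_apply, Pi.zero_apply] at this
      rw [← this, ← Fin.sum_univ_eq_sum_range (fun j => v' j * x (i + j)) n]
      apply Finset.sum_congr rfl
      intro j _
      simp only [hv', j.isLt, dif_pos, Fin.eta]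
      ring
    have hall := ext_rel x n a hrec v' h0
    -- maximal nonzero index
    have hne : (Finset.univ.filter fun j : Fin n => v j ≠ 0).Nonempty := by
      obtain ⟨j, hj⟩ := Function.ne_iff.mp hv0
      exact ⟨j, by simp only [Finset.mem_filter, Finset.mem_univ, true_and]; simpa using hj⟩
    obtain ⟨k, hk, hgt⟩ : ∃ k : Fin n, v k ≠ 0 ∧ ∀ j : Fin n, k < j → v j = 0 := by
      refine ⟨(Finset.univ.filter fun j : Fin n => v j ≠ 0).max' hne,
        (Finset.mem_filter.mp ((Finset.univ.filter _).max'_mem hne)).2, ?_⟩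
      intro j hj
      by_contra hvj
      exact absurd (Finset.le_max' _ j (by simp [hvj])) (not_le.mpr hj)
    obtain ⟨m, hmn, hmk⟩ : ∃ m, m < n ∧ m = (k : ℕ) := ⟨k, k.isLt, rfl⟩
    have hv'm : v' m = v k := by
      simp only [hv', dif_pos hmn]
      congr 1
      exact Fin.ext hmk
    have hv'gt : ∀ j, m < j → v' j = 0 := by
      intro j hj
      by_cases h : j < n
      · simp only [hv', dif_pos h]
        exact hgt ⟨j, h⟩ (by simp only [Fin.lt_def, Fin.val_mk]; omega)
      · simp [hv', h]
    refine hmin m hmn ⟨fun j => -(v' (m - j)) / v' m, ?_⟩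
    intro t
    have h1 : ∑ j ∈ Finset.range (m+1), v' j * x (t + j) = 0 := by
      rw [← hall t]
      apply Finset.sum_subset
      · exact Finset.range_subset_range.mpr (by omega)
      · intro j hjn hjm
        simp only [Finset.mem_range, not_lt] at hjm
        rw [hv'gt j (by omega)]
        ring
    rw [Finset.sum_range_succ, hv'm] at h1
    rw [sum_Icc_reflect' m (fun j => -(v' (m - j)) / v' m * x (t + m - j))]
    have h2 : ∑ i ∈ Finset.range m, -(v' (m - (m - i))) / v' m * x (t + m - (m - i))
        = ∑ i ∈ Finset.range m, -(v' i) / v k * x (t + i) := by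
      apply Finset.sum_congr rfl
      intro i hi
      simp only [Finset.mem_range] at hi
      have h3 : m - (m - i) = i := by omega
      have h4 : t + m - (m - i) = t + i := by omega
      rw [h3, h4, hv'm]
    rw [h2]
    calc x (t + m) = (-(∑ i ∈ Finset.range m, v' i * x (t + i))) / v k := by
          rw [eq_div_iff hk]; linarith [h1]
      _ = ∑ i ∈ Finset.range m, -(v' i) / v k * x (t + i) := by
          rw [← Finset.sum_neg_distrib, Finset.sum_div]
          apply Finset.sum_congr rfl
          intros; ring
  refine ⟨hdet, ?_⟩
  intro a' hrec' j hj
  simp only [Finset.mem_Icc] at hj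
  set H := (Matrix.of fun i j : Fin n => x (i + j)) with hH
  set d : Fin n → ℝ := fun j => a (n - (j : ℕ)) - a' (n - (j : ℕ)) with hd
  have hmul : H.mulVec d = 0 := by
    funext t
    simp only [Matrix.mulVec, dotProduct, Matrix.of_apply, Pi.zero_apply, hd, hH]
    have key : ∀ b : ℕ → ℝ, (∀ s : ℕ, x (s + n) = ∑ j ∈ Finset.Icc 1 n, b j * x (s + n - j)) →
        ∑ i : Fin n, x (t + i) * b (n - (i : ℕ)) = x (t + n) := by
      intro b hb
      rw [hb t, sum_Icc_reflect' n (fun j => b j * x (t + n - j))]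
      rw [← Fin.sum_univ_eq_sum_range (fun i => b (n - i) * x (t + n - (n - i))) n]
      apply Finset.sum_congr rfl
      intro i _
      have hi : (i : ℕ) < n := i.isLt
      rw [mul_comm]
      congr 2
      omega
    have e1 := key a hrec
    have e2 := key a' hrec'
    calc ∑ i : Fin n, x (↑t + ↑i) * (a (n - ↑i) - a' (n - ↑i))
        = (∑ i : Fin n, x (↑t + ↑i) * a (n - ↑i)) - ∑ i : Fin n, x (↑t + ↑i) * a' (n - ↑i) := by
          rw [← Finset.sum_sub_distrib]; apply Finset.sum_congr rfl; intros; ring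
      _ = 0 := by rw [e1, e2, sub_self]
  have hd0 : d = 0 := by
    by_contra hd0
    exact hdet ((Matrix.exists_mulVec_eq_zero_iff).mp ⟨d, hd0, hmul⟩)
  have := congrFun hd0 ⟨n - j, by omega⟩
  simp only [hd, Pi.zero_apply] at this
  have hnj : n - (n - j) = j := by omega
  rw [hnj] at this
  linarith
end

section
/- Let x : ℕ → ℝ satisfy an order-n linear recurrence with coefficients a₁,…,aₙ and no recurrence of any order strictly less than n. Then the full parameter vector (a₁,…,aₙ, x(0),…,x(n−1)) — equivalently (a₁,…,aₙ) together with the numerator coefficients b₀,…,b_{n−1} of the generating function — is uniquely determined by the sequence x. -/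
open Finset

/-- Linear identifiability (Theorem 2 of the paper): for a sequence of minimal order `n`,
the recurrence coefficients, the initial data, and the numerator of the rational
generating function are all uniquely determined by the sequence. -/
theorem stmt12 (x : ℕ → ℝ) (n : ℕ) (a a' : ℕ → ℝ)
    (hrec : ∀ t : ℕ, x (t + n) = ∑ j ∈ Finset.Icc 1 n, a j * x (t + n - j))
    (hrec' : ∀ t : ℕ, x (t + n) = ∑ j ∈ Finset.Icc 1 n, a' j * x (t + n - j))
    (hmin : ∀ m < n, ¬ ∃ c : ℕ → ℝ,
      ∀ t : ℕ, x (t + m) = ∑ j ∈ Finset.Icc 1 m, c j * x (t + m - j)) :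
    (∀ j ∈ Finset.Icc 1 n, a j = a' j) ∧
    ∀ P P' : Polynomial ℝ,
      (((1 - ∑ j ∈ Finset.Icc 1 n, Polynomial.C (a j) * Polynomial.X ^ j :
          Polynomial ℝ)) : PowerSeries ℝ) * PowerSeries.mk x = (P : PowerSeries ℝ) →
      (((1 - ∑ j ∈ Finset.Icc 1 n, Polynomial.C (a' j) * Polynomial.X ^ j :
          Polynomial ℝ)) : PowerSeries ℝ) * PowerSeries.mk x = (P' : PowerSeries ℝ) →
      P = P' := by
  have key : ∀ t : ℕ, ∑ j ∈ Finset.Icc 1 n, (a j - a' j) * x (t + n - j) = 0 := by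
    intro t
    have h1 := hrec t
    have h2 := hrec' t
    simp only [sub_mul, Finset.sum_sub_distrib]
    rw [← h1, ← h2, sub_self]
  have hA : ∀ j ∈ Finset.Icc 1 n, a j = a' j := by
    by_contra hcon
    push_neg at hcon
    obtain ⟨j0, hj0, hne⟩ := hcon
    set S := (Finset.Icc 1 n).filter (fun j => a j ≠ a' j) with hS
    have hSne : S.Nonempty := ⟨j0, by simp [hS, hne]; simpa using hj0⟩
    set k := S.min' hSne with hk
    have hkS : k ∈ S := S.min'_mem hSne
    simp only [hS, Finset.mem_filter, Finset.mem_Icc] at hkS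
    obtain ⟨⟨hk1, hkn⟩, hdk⟩ := hkS
    have hbelow : ∀ j, 1 ≤ j → j < k → a j = a' j := by
      intro j h1j hjk
      by_contra h
      have hjS : j ∈ S := by
        simp only [hS, Finset.mem_filter, Finset.mem_Icc]
        exact ⟨⟨h1j, le_trans (le_of_lt hjk) hkn⟩, h⟩
      exact absurd (S.min'_le j hjS) (not_le.mpr hjk)
    set m := n - k with hm
    have hmn : m < n := by omega
    apply hmin m hmn
    refine ⟨fun i => -(a (k + i) - a' (k + i)) / (a k - a' k), fun t => ?_⟩
    have hkey := key t
    -- restrict sum to Icc k n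
    have h3 : ∑ j ∈ Finset.Icc k n, (a j - a' j) * x (t + n - j) = 0 := by
      rw [← hkey]
      apply Finset.sum_subset
      · intro j hj
        simp only [Finset.mem_Icc] at hj ⊢
        omega
      · intro j hj hj'
        simp only [Finset.mem_Icc] at hj hj'
        have : a j = a' j := hbelow j hj.1 (by omega)
        rw [this, sub_self, zero_mul]
    -- split off the k term
    have hkmem : k ∈ Finset.Icc k n := by simp [hkn]
    rw [← Finset.add_sum_erase _ _ hkmem] at h3
    have herase : (Finset.Icc k n).erase k = Finset.Icc (k + 1) n := by
      rw [Finset.Icc_erase_left]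
      exact (Finset.Icc_add_one_left_eq_Ioc k n).symm
    rw [herase] at h3
    -- reindex Icc (k+1) n as shift of Icc 1 m
    have hmap : Finset.Icc (k + 1) n = Finset.map (addLeftEmbedding k) (Finset.Icc 1 m) := by
      rw [Finset.map_add_left_Icc]
      congr 1
      omega
    rw [hmap, Finset.sum_map] at h3
    simp only [addLeftEmbedding_apply] at h3
    have h4 : ∑ i ∈ Finset.Icc 1 m, (a (k + i) - a' (k + i)) * x (t + n - (k + i))
        = ∑ i ∈ Finset.Icc 1 m, (a (k + i) - a' (k + i)) * x (t + m - i) := by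
      apply Finset.sum_congr rfl
      intro i hi
      simp only [Finset.mem_Icc] at hi
      congr 2
      omega
    rw [h4] at h3
    have htnk : t + n - k = t + m := by omega
    rw [htnk] at h3
    have hd : a k - a' k ≠ 0 := sub_ne_zero.mpr hdk
    have h5 : ∑ i ∈ Finset.Icc 1 m, -(a (k + i) - a' (k + i)) / (a k - a' k) * x (t + m - i)
        = (-(a k - a' k)⁻¹) * ∑ i ∈ Finset.Icc 1 m, (a (k + i) - a' (k + i)) * x (t + m - i) := by
      rw [Finset.mul_sum]
      apply Finset.sum_congr rfl
      intro i _
      field_simp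
    rw [h5]
    have h6 : ∑ i ∈ Finset.Icc 1 m, (a (k + i) - a' (k + i)) * x (t + m - i)
        = -((a k - a' k) * x (t + m)) := by linarith
    rw [h6]
    field_simp
  refine ⟨hA, fun P P' hP hP' => ?_⟩
  have hpoly : (∑ j ∈ Finset.Icc 1 n, Polynomial.C (a j) * Polynomial.X ^ j : Polynomial ℝ)
      = ∑ j ∈ Finset.Icc 1 n, Polynomial.C (a' j) * Polynomial.X ^ j :=
    Finset.sum_congr rfl fun j hj => by rw [hA j hj]
  rw [hpoly] at hP
  have : (P : PowerSeries ℝ) = (P' : PowerSeries ℝ) := by rw [← hP, ← hP']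
  exact_mod_cast this
end
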